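/- With S, R₁, R₂, R₃ as in the 2-fold symmetric parameterization (σ = τ = √(ρ+conj(ρ))), one has S·R₁·S⁻¹ = R₁R₂R₁⁻¹, S·R₂·S⁻¹ = R₁R₃R₁R₃⁻¹R₁⁻¹, and S·R₃·S⁻¹ = R₁R₃R₁⁻¹. -/

import Mathlib

set_option maxHeartbeats 0
set_option maxRecDepth 20000

private lemma aux_Sinv (u ρ t : ℂ) (hu0 : u ≠ 0) :
    (!![ρ, u * (1 - ρ - (t * t - ρ)), u^2 * t;
      u⁻¹, 0, 0; 0, u⁻¹ * t, -1] : Matrix (Fin 3) (Fin 3) ℂ)⁻¹ =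
    !![0, u, 0; u⁻¹, -ρ, u*t; t*(u⁻¹)^2, -ρ*t*u⁻¹, t*t-1] := by
  apply Matrix.inv_eq_right_inv
  rw [Matrix.mul_fin_three]
  ext i j
  fin_cases i <;> fin_cases j
  all_goals try simp [Matrix.vecHead, Matrix.vecTail]
  all_goals try ring_nf
  all_goals try field_simp
  all_goals try ring_nf
  all_goals try field_simp
  all_goals try rw [div_eq_iff (by simp [hu0])]
  all_goals try ring
  all_goals try tauto

private lemma aux_R₁inv (u ρ t : ℂ) (hu0 : u ≠ 0) :
    (!![u^2, ρ, -u * t; 0, u⁻¹, 0; 0, 0, u⁻¹] :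
      Matrix (Fin 3) (Fin 3) ℂ)⁻¹ =
    !![(u⁻¹)^2, -ρ*(u⁻¹)^2 * u, t; 0, u, 0; 0, 0, u] := by
  apply Matrix.inv_eq_right_inv
  rw [Matrix.mul_fin_three]
  ext i j
  fin_cases i <;> fin_cases j
  all_goals try simp [Matrix.vecHead, Matrix.vecTail]
  all_goals try ring_nf
  all_goals try field_simp
  all_goals try ring_nf
  all_goals try field_simp
  all_goals try rw [div_eq_iff (by simp [hu0])]
  all_goals try ring
  all_goals try tauto

private lemma aux_R₃inv (u ρ t : ℂ) (hu0 : u ≠ 0) :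
    (!![u⁻¹, 0, 0; 0, u⁻¹, 0; t, -u * t, u^2] :
      Matrix (Fin 3) (Fin 3) ℂ)⁻¹ =
    !![u, 0, 0; 0, u, 0; -t*u⁻¹, t, (u⁻¹)^2] := by
  apply Matrix.inv_eq_right_inv
  rw [Matrix.mul_fin_three]
  ext i j
  fin_cases i <;> fin_cases j
  all_goals try simp [Matrix.vecHead, Matrix.vecTail]
  all_goals try ring_nf
  all_goals try field_simp
  all_goals try ring_nf
  all_goals try field_simp
  all_goals try rw [div_eq_iff (by simp [hu0])]
  all_goals try ring
  all_goals try tauto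

private lemma aux_c1 (u ρ t : ℂ) (hu0 : u ≠ 0) :
    (!![ρ, u * (1 - ρ - (t * t - ρ)), u^2 * t; u⁻¹, 0, 0; 0, u⁻¹ * t, -1] *
     !![u^2, ρ, -u * t; 0, u⁻¹, 0; 0, 0, u⁻¹] *
     !![0, u, 0; u⁻¹, -ρ, u*t; t*(u⁻¹)^2, -ρ*t*u⁻¹, t*t-1] : Matrix (Fin 3) (Fin 3) ℂ) =
    !![u^2, ρ, -u * t; 0, u⁻¹, 0; 0, 0, u⁻¹] *
     !![u⁻¹, 0, 0; -u * (t * t - ρ), u^2, t; 0, 0, u⁻¹] *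
     !![(u⁻¹)^2, -ρ*(u⁻¹)^2 * u, t; 0, u, 0; 0, 0, u] := by
  simp only [Matrix.mul_fin_three]
  ext i j
  fin_cases i <;> fin_cases j
  all_goals try simp [Matrix.vecHead, Matrix.vecTail]
  all_goals try ring_nf
  all_goals try field_simp
  all_goals try ring_nf
  all_goals try field_simp
  all_goals try rw [div_eq_iff (by simp [hu0])]
  all_goals try ring
  all_goals try tauto

private lemma aux_c2 (u ρ t : ℂ) (hu0 : u ≠ 0) :
    (!![ρ, u * (1 - ρ - (t * t - ρ)), u^2 * t; u⁻¹, 0, 0; 0, u⁻¹ * t, -1] *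
     !![u⁻¹, 0, 0; -u * (t * t - ρ), u^2, t; 0, 0, u⁻¹] *
     !![0, u, 0; u⁻¹, -ρ, u*t; t*(u⁻¹)^2, -ρ*t*u⁻¹, t*t-1] : Matrix (Fin 3) (Fin 3) ℂ) =
    !![u^2, ρ, -u * t; 0, u⁻¹, 0; 0, 0, u⁻¹] *
     !![u⁻¹, 0, 0; 0, u⁻¹, 0; t, -u * t, u^2] *
     !![u^2, ρ, -u * t; 0, u⁻¹, 0; 0, 0, u⁻¹] *
     !![u, 0, 0; 0, u, 0; -t*u⁻¹, t, (u⁻¹)^2] *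
     !![(u⁻¹)^2, -ρ*(u⁻¹)^2 * u, t; 0, u, 0; 0, 0, u] := by
  simp only [Matrix.mul_fin_three]
  ext i j
  fin_cases i <;> fin_cases j
  all_goals try simp [Matrix.vecHead, Matrix.vecTail]
  all_goals try ring_nf
  all_goals try field_simp
  all_goals try ring_nf
  all_goals try field_simp
  all_goals try rw [div_eq_iff (by simp [hu0])]
  all_goals try ring
  all_goals try tauto
  all_goals try (
    have h75 : (u:ℂ)^75 * u⁻¹^48 = u^27 := by
      rw [inv_pow, mul_inv_eq_iff_eq_mul₀ (pow_ne_zero _ hu0)]; ring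
    have h78 : (u:ℂ)^78 * u⁻¹^48 = u^30 := by
      rw [inv_pow, mul_inv_eq_iff_eq_mul₀ (pow_ne_zero _ hu0)]; ring
    linear_combination (t^4 - 2*t^2) * h75 + (t^2 - 1) * h78)

private lemma aux_c3 (u ρ t : ℂ) (hu0 : u ≠ 0) :
    (!![ρ, u * (1 - ρ - (t * t - ρ)), u^2 * t; u⁻¹, 0, 0; 0, u⁻¹ * t, -1] *
     !![u⁻¹, 0, 0; 0, u⁻¹, 0; t, -u * t, u^2] *
     !![0, u, 0; u⁻¹, -ρ, u*t; t*(u⁻¹)^2, -ρ*t*u⁻¹, t*t-1] : Matrix (Fin 3) (Fin 3) ℂ) =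
    !![u^2, ρ, -u * t; 0, u⁻¹, 0; 0, 0, u⁻¹] *
     !![u⁻¹, 0, 0; 0, u⁻¹, 0; t, -u * t, u^2] *
     !![(u⁻¹)^2, -ρ*(u⁻¹)^2 * u, t; 0, u, 0; 0, 0, u] := by
  simp only [Matrix.mul_fin_three]
  ext i j
  fin_cases i <;> fin_cases j
  all_goals try simp [Matrix.vecHead, Matrix.vecTail]
  all_goals try ring_nf
  all_goals try field_simp
  all_goals try ring_nf
  all_goals try field_simp
  all_goals try rw [div_eq_iff (by simp [hu0])]
  all_goals try ring
  all_goals try tauto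

theorem stmt_7 (u ρ : ℂ) (hu : ‖u‖ = 1)
    (hρ : 0 ≤ (ρ + starRingEnd ℂ ρ).re)
    (t : ℂ) (ht : t = (Real.sqrt ((ρ + starRingEnd ℂ ρ).re) : ℂ))
    (S R₁ R₂ R₃ : Matrix (Fin 3) (Fin 3) ℂ)
    (hS : S = !![ρ, u * (1 - ρ - starRingEnd ℂ ρ), u^2 * t;
                 starRingEnd ℂ u, 0, 0;
                 0, starRingEnd ℂ u * t, -1])
    (hR₁ : R₁ = !![u^2, ρ, -u * t; 0, starRingEnd ℂ u, 0; 0, 0, starRingEnd ℂ u])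
    (hR₂ : R₂ = !![starRingEnd ℂ u, 0, 0; -u * starRingEnd ℂ ρ, u^2, t; 0, 0, starRingEnd ℂ u])
    (hR₃ : R₃ = !![starRingEnd ℂ u, 0, 0; 0, starRingEnd ℂ u, 0; t, -u * t, u^2]) :
    S * R₁ * S⁻¹ = R₁ * R₂ * R₁⁻¹ ∧
    S * R₂ * S⁻¹ = R₁ * R₃ * R₁ * R₃⁻¹ * R₁⁻¹ ∧
    S * R₃ * S⁻¹ = R₁ * R₃ * R₁⁻¹ := by
  have hu0 : u ≠ 0 := by
    intro h; rw [h] at hu; simp at hu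
  have ht2 : t * t = ρ + starRingEnd ℂ ρ := by
    rw [ht, ← Complex.ofReal_mul, Real.mul_self_sqrt hρ]
    have him : (ρ + starRingEnd ℂ ρ).im = 0 := by
      simp [Complex.add_im]
    exact Complex.ext (by simp) (by simp [him])
  have hc : starRingEnd ℂ u = u⁻¹ := by
    have h1 : u * starRingEnd ℂ u = 1 := by
      rw [Complex.mul_conj]
      norm_cast
      rw [Complex.normSq_eq_norm_sq, hu]; norm_num
    field_simp
    linear_combination h1
  have hq : starRingEnd ℂ ρ = t * t - ρ := by rw [ht2]; ring
  simp only [hc, hq] at hS hR₁ hR₂ hR₃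
  subst hS hR₁ hR₂ hR₃
  rw [aux_Sinv u ρ t hu0, aux_R₁inv u ρ t hu0, aux_R₃inv u ρ t hu0]
  exact ⟨aux_c1 u ρ t hu0, aux_c2 u ρ t hu0, aux_c3 u ρ t hu0⟩
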